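/- The polynomial P₄(T) = T²⁰ − 5T¹⁸ + 12T¹⁶ − 18T¹⁴ + 20T¹² − (219/11)·T¹⁰ + 20T⁸ − 18T⁶ + 12T⁴ − 5T² + 1 ∈ ℚ[T] is irreducible over ℚ, and no complex root of unity is a root of P₄ (i.e. if z ∈ ℂ satisfies zⁿ = 1 for some n ≥ 1, then P₄(z) ≠ 0). -/

import Mathlib

open Polynomial


noncomputable def hq : ℝ[X] :=
  C 11 * X ^ 5 - C 165 * X ^ 4 + C 957 * X ^ 3 - C 2640 * X ^ 2 + C 3355 * X - C 1451

lemma hq_eval (x : ℝ) :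
    hq.eval x = 11*x^5 - 165*x^4 + 957*x^3 - 2640*x^2 + 3355*x - 1451 := by
  simp [hq]

lemma hq_natDegree : hq.natDegree = 5 := by unfold hq; compute_degree!

lemma step {p q : ℝ[X]} {a b : ℝ} (hab : a ≠ b) (hp : p = (X - C a) * q)
    (hb : p.eval b = 0) : q.eval b = 0 := by
  rw [hp] at hb; simp at hb
  rcases hb with h | h
  · exact absurd (by linarith [sub_eq_zero.mp h] : a = b) hab
  · exact h

example : True := trivial

section
variable (u₁ u₂ u₃ u₄ u₅ : ℝ)

lemma factor_test (e₁ : hq.eval u₁ = 0) (e₂ : hq.eval u₂ = 0) (e₃ : hq.eval u₃ = 0)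
    (e₄ : hq.eval u₄ = 0) (e₅ : hq.eval u₅ = 0)
    (h12 : u₁ ≠ u₂) (h13 : u₁ ≠ u₃) (h14 : u₁ ≠ u₄) (h15 : u₁ ≠ u₅)
    (h23 : u₂ ≠ u₃) (h24 : u₂ ≠ u₄) (h25 : u₂ ≠ u₅)
    (h34 : u₃ ≠ u₄) (h35 : u₃ ≠ u₅) (h45 : u₄ ≠ u₅) :
    hq = (X - C u₁) * ((X - C u₂) * ((X - C u₃) * ((X - C u₄) * ((X - C u₅) * C 11)))) := by
  obtain ⟨p1, hp1⟩ : (X - C u₁) ∣ hq := dvd_iff_isRoot.mpr e₁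
  obtain ⟨p2, hp2⟩ : (X - C u₂) ∣ p1 := dvd_iff_isRoot.mpr (step h12 hp1 e₂)
  obtain ⟨p3, hp3⟩ : (X - C u₃) ∣ p2 :=
    dvd_iff_isRoot.mpr (step h23 hp2 (step h13 hp1 e₃))
  obtain ⟨p4, hp4⟩ : (X - C u₄) ∣ p3 :=
    dvd_iff_isRoot.mpr (step h34 hp3 (step h24 hp2 (step h14 hp1 e₄)))
  obtain ⟨p5, hp5⟩ : (X - C u₅) ∣ p4 :=
    dvd_iff_isRoot.mpr (step h45 hp4 (step h35 hp3 (step h25 hp2 (step h15 hp1 e₅))))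
  have hqne : hq ≠ 0 := by
    intro h
    have h0 : hq.eval 0 = -1451 := by rw [hq_eval]; norm_num
    rw [h] at h0; simp at h0
  have hfull : hq = (X - C u₁) * ((X - C u₂) * ((X - C u₃) * ((X - C u₄) * ((X - C u₅) * p5)))) := by
    rw [hp1, hp2, hp3, hp4, hp5]
  have hp5ne : p5 ≠ 0 := by
    intro h; rw [h] at hfull; simp at hfull; exact hqne hfull
  have n5 : (X - C u₅) * p5 ≠ 0 := mul_ne_zero (X_sub_C_ne_zero u₅) hp5ne
  have n4 : (X - C u₄) * ((X - C u₅) * p5) ≠ 0 := mul_ne_zero (X_sub_C_ne_zero u₄) n5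
  have n3 : (X - C u₃) * _ ≠ 0 := mul_ne_zero (X_sub_C_ne_zero u₃) n4
  have n2 : (X - C u₂) * _ ≠ 0 := mul_ne_zero (X_sub_C_ne_zero u₂) n3
  have hdeg : p5.natDegree = 0 := by
    have h5 := hq_natDegree
    rw [hfull] at h5
    rw [natDegree_mul (X_sub_C_ne_zero u₁) n2, natDegree_mul (X_sub_C_ne_zero u₂) n3,
      natDegree_mul (X_sub_C_ne_zero u₃) n4, natDegree_mul (X_sub_C_ne_zero u₄) n5,
      natDegree_mul (X_sub_C_ne_zero u₅) hp5ne] at h5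
    simp only [natDegree_X_sub_C] at h5
    omega
  obtain ⟨c, hc⟩ := natDegree_eq_zero.mp hdeg
  have hlc : hq.leadingCoeff = 11 := by
    rw [Polynomial.leadingCoeff, hq_natDegree]
    simp [hq, coeff_X_pow]
  rw [hfull] at hlc
  simp only [leadingCoeff_mul, leadingCoeff_X_sub_C, ← hc, leadingCoeff_C, one_mul] at hlc
  rw [hfull, ← hc, hlc]
end

lemma quintic_roots :
    ∃ u₁ u₂ u₃ u₄ u₅ : ℝ,
      (0 < u₁ ∧ u₁ < u₂ ∧ u₂ < u₃ ∧ u₃ < u₄ ∧ u₄ < u₅ ∧ u₅ < 4) ∧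
      ∀ v : ℂ, 11*v^5 - 165*v^4 + 957*v^3 - 2640*v^2 + 3355*v - 1451 = 0 →
        v = (u₁:ℂ) ∨ v = u₂ ∨ v = u₃ ∨ v = u₄ ∨ v = u₅ := by
  have hc : Continuous fun x : ℝ => hq.eval x := hq.continuous
  have I1 : ∃ x ∈ Set.Ioo (0:ℝ) 1, hq.eval x = 0 := by
    have h := intermediate_value_Ioo (by norm_num : (0:ℝ) ≤ 1) hc.continuousOn
    have hm : (0:ℝ) ∈ Set.Ioo (hq.eval 0) (hq.eval 1) := by
      simp [hq_eval]; norm_num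
    obtain ⟨x, hx, hfx⟩ := h hm
    exact ⟨x, hx, hfx⟩
  have I2 : ∃ x ∈ Set.Ioo (1:ℝ) (7/2), hq.eval x = 0 := by
    have h := intermediate_value_Ioo' (by norm_num : (1:ℝ) ≤ 7/2) hc.continuousOn
    have hm : (0:ℝ) ∈ Set.Ioo (hq.eval (7/2)) (hq.eval 1) := by
      simp [hq_eval]; norm_num
    obtain ⟨x, hx, hfx⟩ := h hm
    exact ⟨x, hx, hfx⟩
  have I3 : ∃ x ∈ Set.Ioo (7/2:ℝ) (29/8), hq.eval x = 0 := by
    have h := intermediate_value_Ioo (by norm_num : (7/2:ℝ) ≤ 29/8) hc.continuousOn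
    have hm : (0:ℝ) ∈ Set.Ioo (hq.eval (7/2)) (hq.eval (29/8)) := by
      simp [hq_eval]; norm_num
    obtain ⟨x, hx, hfx⟩ := h hm
    exact ⟨x, hx, hfx⟩
  have I4 : ∃ x ∈ Set.Ioo (29/8:ℝ) (37/10), hq.eval x = 0 := by
    have h := intermediate_value_Ioo' (by norm_num : (29/8:ℝ) ≤ 37/10) hc.continuousOn
    have hm : (0:ℝ) ∈ Set.Ioo (hq.eval (37/10)) (hq.eval (29/8)) := by
      simp [hq_eval]; norm_num
    obtain ⟨x, hx, hfx⟩ := h hm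
    exact ⟨x, hx, hfx⟩
  have I5 : ∃ x ∈ Set.Ioo (37/10:ℝ) (15/4), hq.eval x = 0 := by
    have h := intermediate_value_Ioo (by norm_num : (37/10:ℝ) ≤ 15/4) hc.continuousOn
    have hm : (0:ℝ) ∈ Set.Ioo (hq.eval (37/10)) (hq.eval (15/4)) := by
      simp [hq_eval]; norm_num
    obtain ⟨x, hx, hfx⟩ := h hm
    exact ⟨x, hx, hfx⟩
  obtain ⟨u₁, hu₁, e₁⟩ := I1
  obtain ⟨u₂, hu₂, e₂⟩ := I2
  obtain ⟨u₃, hu₃, e₃⟩ := I3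
  obtain ⟨u₄, hu₄, e₄⟩ := I4
  obtain ⟨u₅, hu₅, e₅⟩ := I5
  obtain ⟨a1, b1⟩ := hu₁; obtain ⟨a2, b2⟩ := hu₂; obtain ⟨a3, b3⟩ := hu₃
  obtain ⟨a4, b4⟩ := hu₄; obtain ⟨a5, b5⟩ := hu₅
  refine ⟨u₁, u₂, u₃, u₄, u₅, ⟨a1, by linarith, by linarith, by linarith, by linarith, by linarith⟩, ?_⟩
  have hfact := factor_test u₁ u₂ u₃ u₄ u₅ e₁ e₂ e₃ e₄ e₅
    (by linarith) (by linarith) (by linarith) (by linarith) (by linarith)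
    (by linarith) (by linarith) (by linarith) (by linarith) (by linarith)
  intro v hv
  have h1 : aeval v hq = 11*v^5 - 165*v^4 + 957*v^3 - 2640*v^2 + 3355*v - 1451 := by
    simp [hq, map_sub, map_add, map_mul, map_pow, aeval_X, aeval_C]
    try push_cast
    try ring
  have h2 : aeval v hq = (v - (u₁:ℂ)) * ((v - u₂) * ((v - u₃) * ((v - u₄) * ((v - u₅) * 11)))) := by
    rw [hfact]
    simp [map_sub, map_add, map_mul, aeval_X, aeval_C]
    try push_cast
    try ring
  rw [h1, hv] at h2
  have h3 := h2.symm
  simp only [mul_eq_zero, sub_eq_zero] at h3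
  rcases h3 with h | h | h | h | h | h
  · exact Or.inl h
  · exact Or.inr (Or.inl h)
  · exact Or.inr (Or.inr (Or.inl h))
  · exact Or.inr (Or.inr (Or.inr (Or.inl h)))
  · exact Or.inr (Or.inr (Or.inr (Or.inr h)))
  · norm_num at h

/-- The normalized characteristic polynomial of Frobenius for `X_γ`, `γ` a non-square
mod 11. -/
noncomputable def P₄ : ℚ[X] :=
  X ^ 20 - 5 * X ^ 18 + 12 * X ^ 16 - 18 * X ^ 14 + 20 * X ^ 12 - C (219 / 11 : ℚ) * X ^ 10 +
    20 * X ^ 8 - 18 * X ^ 6 + 12 * X ^ 4 - 5 * X ^ 2 + 1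


lemma aeval_P₄ (z : ℂ) :
    aeval z P₄ = z^20 - 5*z^18 + 12*z^16 - 18*z^14 + 20*z^12 - (219/11 : ℂ)*z^10 +
      20*z^8 - 18*z^6 + 12*z^4 - 5*z^2 + 1 := by
  simp [P₄, map_sub, map_add, map_mul, map_pow, aeval_X, aeval_C, map_ofNat]
  try norm_num

lemma P4_root_abs (z : ℂ) (hz : aeval z P₄ = 0) : ‖z‖ = 1 := by
  have hz0 : z ≠ 0 := by
    intro h
    rw [h, aeval_P₄] at hz
    norm_num at hz
  set u : ℂ := (z + z⁻¹)^2 with hu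
  have e1 : u * z^2 = (z^2+1)^2 := by
    rw [hu]
    have hzi : (z + z⁻¹) * z = z^2 + 1 := by
      rw [add_mul, inv_mul_cancel₀ hz0]; ring
    calc (z+z⁻¹)^2 * z^2 = ((z+z⁻¹)*z)^2 := by ring
    _ = (z^2+1)^2 := by rw [hzi]
  have e2 : u^2 * z^4 = (z^2+1)^4 := by
    rw [show u^2*z^4 = (u*z^2)^2 by ring, e1]; ring
  have e3 : u^3 * z^6 = (z^2+1)^6 := by
    rw [show u^3*z^6 = (u*z^2)^3 by ring, e1]; ring
  have e4 : u^4 * z^8 = (z^2+1)^8 := by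
    rw [show u^4*z^8 = (u*z^2)^4 by ring, e1]; ring
  have e5 : u^5 * z^10 = (z^2+1)^10 := by
    rw [show u^5*z^10 = (u*z^2)^5 by ring, e1]; ring
  have I1 : 11 * aeval z P₄ = 11*(z^2+1)^10 - 165*(z^2+1)^8*z^2 + 957*(z^2+1)^6*z^4
      - 2640*(z^2+1)^4*z^6 + 3355*(z^2+1)^2*z^8 - 1451*z^10 := by
    rw [aeval_P₄]; ring
  rw [hz, mul_zero] at I1
  have key : z^10 * (11*u^5 - 165*u^4 + 957*u^3 - 2640*u^2 + 3355*u - 1451) = 0 := by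
    linear_combination 11*e5 - 165*z^2*e4 + 957*z^4*e3 - 2640*z^6*e2 + 3355*z^8*e1 - I1
  have hq0 : 11*u^5 - 165*u^4 + 957*u^3 - 2640*u^2 + 3355*u - 1451 = 0 := by
    rcases mul_eq_zero.mp key with h | h
    · exact absurd h (pow_ne_zero _ hz0)
    · exact h
  obtain ⟨u₁, u₂, u₃, u₄, u₅, hord, hclass⟩ := quintic_roots
  have hr : ∃ r : ℝ, 0 < r ∧ r < 4 ∧ u = (r:ℂ) := by
    rcases hclass u hq0 with h | h | h | h | h
    · exact ⟨u₁, hord.1, by linarith [hord.2.1, hord.2.2.1, hord.2.2.2.1, hord.2.2.2.2.1, hord.2.2.2.2.2], h⟩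
    · exact ⟨u₂, by linarith [hord.1, hord.2.1], by linarith [hord.2.2.1, hord.2.2.2.1, hord.2.2.2.2.1, hord.2.2.2.2.2], h⟩
    · exact ⟨u₃, by linarith [hord.1, hord.2.1, hord.2.2.1], by linarith [hord.2.2.2.1, hord.2.2.2.2.1, hord.2.2.2.2.2], h⟩
    · exact ⟨u₄, by linarith [hord.1, hord.2.1, hord.2.2.1, hord.2.2.2.1], by linarith [hord.2.2.2.2.1, hord.2.2.2.2.2], h⟩
    · exact ⟨u₅, by linarith [hord.1, hord.2.1, hord.2.2.1, hord.2.2.2.1, hord.2.2.2.2.1], by linarith [hord.2.2.2.2.2], h⟩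
  obtain ⟨r, hr0, hr4, hur⟩ := hr
  set w : ℂ := z + z⁻¹ with hw
  have hw2 : w^2 = (r:ℂ) := hur ▸ rfl
  -- w is real
  have him : w.im = 0 := by
    have hre : w.re^2 - w.im^2 = r := by
      have := congrArg Complex.re hw2
      simpa [pow_two, Complex.mul_re] using this
    have him2 : w.re * w.im + w.im * w.re = 0 := by
      have := congrArg Complex.im hw2
      simpa [pow_two, Complex.mul_im] using this
    by_contra h
    have : w.re = 0 := by
      rcases mul_eq_zero.mp (by linarith : w.re * w.im = 0) with h' | h'
      · exact h'
      · exact absurd h' h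
    nlinarith [sq_nonneg w.im]
  set a : ℝ := w.re with ha
  have hwa : w = (a : ℂ) := by
    apply Complex.ext <;> simp [ha, him]
  have ha2 : a^2 = r := by
    have := congrArg Complex.re hw2
    simpa [hwa, pow_two, Complex.mul_re, him] using this
  have ha4 : a^2 < 4 := by rw [ha2]; exact hr4
  -- z² + 1 = a z
  have hzz : z^2 + 1 = (a:ℂ) * z := by
    rw [← hwa, hw]
    field_simp
  have hconj : (starRingEnd ℂ) z ^ 2 + 1 = (a:ℂ) * (starRingEnd ℂ) z := by
    have := congrArg (starRingEnd ℂ) hzz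
    simpa [map_add, map_mul, map_pow, Complex.conj_ofReal] using this
  have hfac : (z - (starRingEnd ℂ) z) * (z + (starRingEnd ℂ) z - a) = 0 := by
    linear_combination hzz - hconj
  rcases mul_eq_zero.mp hfac with h | h
  · -- z real: contradiction
    exfalso
    have hzr : z = ((z.re : ℝ) : ℂ) := by
      have : z.im = 0 := Complex.conj_eq_iff_im.mp (sub_eq_zero.mp h).symm
      apply Complex.ext <;> simp [this]
    set b : ℝ := z.re
    have hb : b^2 + 1 = a * b := by
      have := hzz
      rw [hzr] at this
      exact_mod_cast this
    nlinarith [sq_nonneg (2*b - a)]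
  · -- |z| = 1
    have hcz : (starRingEnd ℂ) z = (a:ℂ) - z := by linear_combination h
    have hns : (Complex.normSq z : ℂ) = 1 := by
      rw [← Complex.mul_conj, hcz]
      linear_combination -hzz
    have hns' : Complex.normSq z = 1 := by exact_mod_cast hns
    rw [Complex.norm_def, hns', Real.sqrt_one]

/-- `11 · P₄` as an integer polynomial. -/
noncomputable def Qz : ℤ[X] :=
  C 11 * X ^ 20 - C 55 * X ^ 18 + C 132 * X ^ 16 - C 198 * X ^ 14 + C 220 * X ^ 12 -
    C 219 * X ^ 10 + C 220 * X ^ 8 - C 198 * X ^ 6 + C 132 * X ^ 4 - C 55 * X ^ 2 + C 11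

lemma Qz_natDegree : Qz.natDegree = 20 := by unfold Qz; compute_degree!

lemma Qz_coeff_20 : Qz.coeff 20 = 11 := by
  simp [Qz, coeff_X_pow, coeff_C]

lemma Qz_coeff_10 : Qz.coeff 10 = -219 := by
  simp [Qz, coeff_X_pow, coeff_C]

lemma Qz_leadingCoeff : Qz.leadingCoeff = 11 := by
  rw [Polynomial.leadingCoeff, Qz_natDegree, Qz_coeff_20]

lemma Qz_map_rat : Qz.map (algebraMap ℤ ℚ) = C 11 * P₄ := by
  have h219 : (11:ℚ[X]) * C (219/11 : ℚ) = 219 := by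
    rw [show (11:ℚ[X]) = C (11:ℚ) from (map_ofNat C 11).symm,
      show (219:ℚ[X]) = C (219:ℚ) from (map_ofNat C 219).symm, ← C_mul]
    norm_num
  simp only [Qz, P₄, Polynomial.map_add, Polynomial.map_sub, Polynomial.map_mul,
    Polynomial.map_pow, Polynomial.map_C, Polynomial.map_X]
  push_cast
  simp only [map_ofNat]
  linear_combination ((X:ℚ[X])^10) * h219

lemma aeval_Qz (z : ℂ) : aeval z Qz = 11 * aeval z P₄ := by
  rw [aeval_P₄]
  simp [Qz, map_sub, map_add, map_mul, map_pow, aeval_X, aeval_C, map_ofNat]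
  push_cast
  ring

lemma Qz_map_zmod : Qz.map (Int.castRingHom (ZMod 11)) = X ^ 10 := by
  simp only [Qz, Polynomial.map_add, Polynomial.map_sub, Polynomial.map_mul,
    Polynomial.map_pow, Polynomial.map_C, Polynomial.map_X]
  have h11 : (Int.castRingHom (ZMod 11)) 11 = 0 := by decide
  have h55 : (Int.castRingHom (ZMod 11)) 55 = 0 := by decide
  have h132 : (Int.castRingHom (ZMod 11)) 132 = 0 := by decide
  have h198 : (Int.castRingHom (ZMod 11)) 198 = 0 := by decide
  have h220 : (Int.castRingHom (ZMod 11)) 220 = 0 := by decide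
  have h219 : (Int.castRingHom (ZMod 11)) 219 = -1 := by decide
  rw [h11, h55, h132, h198, h220, h219]
  simp

instance fact_prime_11 : Fact (Nat.Prime 11) := ⟨by norm_num⟩

lemma abs_prod_one (s : Multiset ℂ) (h : ∀ r ∈ s, ‖r‖ = 1) :
    ‖s.prod‖ = 1 := by
  induction s using Multiset.induction_on with
  | empty => simp
  | cons a t ih =>
    rw [Multiset.prod_cons, norm_mul, h a (Multiset.mem_cons_self a t),
      ih fun r hr => h r (Multiset.mem_cons_of_mem hr), one_mul]

lemma unit_lead {F G : ℤ[X]} (hFG : F * G = Qz) (hlc : IsUnit F.leadingCoeff) : IsUnit F := by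
  rcases Nat.eq_zero_or_pos F.natDegree with hdeg | hdeg
  · -- constant
    obtain ⟨c, hc⟩ := natDegree_eq_zero.mp hdeg
    rw [← hc]
    rw [← hc, leadingCoeff_C] at hlc
    exact hlc.map C
  · exfalso
    -- leading coefficient is ±1
    have hlc1 : F.leadingCoeff = 1 ∨ F.leadingCoeff = -1 := Int.isUnit_iff.mp hlc
    -- mod 11
    have hmap : (F.map (Int.castRingHom (ZMod 11))) * (G.map (Int.castRingHom (ZMod 11)))
        = X ^ 10 := by
      rw [← Polynomial.map_mul, hFG, Qz_map_zmod]
    have hlcz : (Int.castRingHom (ZMod 11)) F.leadingCoeff ≠ 0 := by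
      rcases hlc1 with h | h <;> rw [h] <;> decide
    have hdegF : (F.map (Int.castRingHom (ZMod 11))).natDegree = F.natDegree :=
      natDegree_map_of_leadingCoeff_ne_zero _ hlcz
    have hdvd : F.map (Int.castRingHom (ZMod 11)) ∣ X ^ 10 := ⟨_, hmap.symm⟩
    obtain ⟨i, hi, u, hu⟩ :=
      (dvd_prime_pow (p := (X : (ZMod 11)[X])) Polynomial.prime_X 10).mp hdvd
    obtain ⟨c, hcu, hcC⟩ := Polynomial.isUnit_iff.mp u.isUnit
    have hune : (↑u : (ZMod 11)[X]) ≠ 0 := Units.ne_zero u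
    have hmapFne : F.map (Int.castRingHom (ZMod 11)) ≠ 0 := by
      intro h
      rw [h, zero_mul] at hu
      exact (pow_ne_zero i Polynomial.X_ne_zero) hu.symm
    have hdi : (F.map (Int.castRingHom (ZMod 11))).natDegree = i := by
      have hdg := congrArg natDegree hu
      rwa [natDegree_mul hmapFne hune, natDegree_eq_zero_of_isUnit u.isUnit, add_zero,
        natDegree_X_pow] at hdg
    have hi1 : 1 ≤ i := by
      rw [hdegF] at hdi
      omega
    have hc0 : (F.map (Int.castRingHom (ZMod 11))).coeff 0 = 0 := by
      have h0 := congrArg (fun p => Polynomial.coeff p 0) hu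
      simp only [mul_coeff_zero, Polynomial.coeff_X_pow] at h0
      rw [if_neg (by omega : ¬ 0 = i)] at h0
      have huc : (↑u : (ZMod 11)[X]).coeff 0 ≠ 0 := by
        rw [← hcC, coeff_C, if_pos rfl]
        exact hcu.ne_zero
      rcases mul_eq_zero.mp h0 with h | h
      · exact h
      · exact absurd h huc
    have hdvd11 : (11:ℤ) ∣ F.coeff 0 := by
      rw [Polynomial.coeff_map] at hc0
      have hz : ((F.coeff 0 : ℤ) : ZMod 11) = 0 := hc0
      exact_mod_cast (ZMod.intCast_zmod_eq_zero_iff_dvd (F.coeff 0) 11).mp hz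
    -- complex absolute value of constant coefficient is 1
    set Fc : ℂ[X] := F.map (Int.castRingHom ℂ) with hFc
    have hFne : F ≠ 0 := by
      intro h
      rw [h, zero_mul] at hFG
      have := Qz_leadingCoeff
      rw [← hFG] at this
      simp at this
    have hFcne : Fc ≠ 0 := by
      rw [hFc]
      exact (Polynomial.map_ne_zero_iff (f := Int.castRingHom ℂ)
        (by exact Int.cast_injective)).mpr hFne
    have hsplit : Fc.Splits := IsAlgClosed.splits Fc
    have hprod := hsplit.eq_prod_roots
    -- all roots have absolute value 1
    have hroots : ∀ r ∈ Fc.roots, ‖r‖ = 1 := by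
      intro r hr
      have hrr : Fc.eval r = 0 := by
        have := Polynomial.isRoot_of_mem_roots hr
        exact this
      have hQz : aeval r Qz = 0 := by
        rw [aeval_def, ← Polynomial.eval_map, algebraMap_int_eq, ← hFG, Polynomial.map_mul,
          eval_mul, ← hFc, hrr, zero_mul]
      have hP : aeval r P₄ = 0 := by
        have h11 := aeval_Qz r
        rw [hQz] at h11
        have : (11:ℂ) ≠ 0 := by norm_num
        field_simp at h11
        exact (mul_eq_zero.mp h11.symm).resolve_left this
      exact P4_root_abs r hP
    -- |F.coeff 0| = 1
    have habs : ‖((F.coeff 0 : ℤ) : ℂ)‖ = 1 := by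
      have h0 : Fc.eval 0 = (F.coeff 0 : ℂ) := by
        rw [← Polynomial.coeff_zero_eq_eval_zero, hFc, Polynomial.coeff_map]
        simp
      rw [← h0, hprod]
      rw [eval_mul, eval_C, norm_mul]
      have hlcabs : ‖Fc.leadingCoeff‖ = 1 := by
        have : Fc.leadingCoeff = (F.leadingCoeff : ℂ) := by
          rw [hFc]
          exact leadingCoeff_map_of_injective (by exact Int.cast_injective) F
        rcases hlc1 with h | h <;> rw [this, h] <;> norm_num
      rw [hlcabs, one_mul]
      rw [Polynomial.eval_multiset_prod]
      rw [Multiset.map_map]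
      apply abs_prod_one
      intro x hx
      obtain ⟨r, hr, hrx⟩ := Multiset.mem_map.mp hx
      have : x = -r := by
        rw [← hrx]
        simp
      rw [this, norm_neg]
      exact hroots r hr
    -- contradiction
    obtain ⟨k, hk⟩ := hdvd11
    rw [Complex.norm_intCast] at habs
    have habs' : |F.coeff 0| = 1 := by exact_mod_cast habs
    rcases (abs_eq (by norm_num : (0:ℤ) ≤ 1)).mp habs' with h | h <;> omega

lemma Qz_primitive : Qz.IsPrimitive := by
  intro r hr
  have h20 : r ∣ Qz.coeff 20 := (C_dvd_iff_dvd_coeff r Qz).mp hr 20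
  have h10 : r ∣ Qz.coeff 10 := (C_dvd_iff_dvd_coeff r Qz).mp hr 10
  rw [Qz_coeff_20] at h20
  rw [Qz_coeff_10] at h10
  have h1 : r ∣ 1 := by
    have := dvd_add (h20.mul_left 20) h10
    norm_num at this
    exact this
  exact isUnit_of_dvd_one h1

lemma Qz_irreducible : Irreducible Qz := by
  constructor
  · intro h
    have := natDegree_eq_zero_of_isUnit h
    rw [Qz_natDegree] at this
    omega
  · intro F G hFG
    have hlc : F.leadingCoeff * G.leadingCoeff = 11 := by
      rw [← leadingCoeff_mul, ← hFG, Qz_leadingCoeff]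
    have h11 : Irreducible (11:ℤ) :=
      (Int.prime_iff_natAbs_prime.mpr (by norm_num)).irreducible
    rcases h11.isUnit_or_isUnit hlc.symm with h | h
    · exact Or.inl (unit_lead hFG.symm h)
    · exact Or.inr (unit_lead (by rw [mul_comm]; exact hFG.symm) h)

lemma P4_irreducible : Irreducible P₄ := by
  have h := (Qz_primitive.irreducible_iff_irreducible_map_fraction_map (K := ℚ)).mp Qz_irreducible
  rw [Qz_map_rat] at h
  have hu : IsUnit (C (11:ℚ)) := Polynomial.isUnit_C.mpr (by norm_num)
  rw [← IsUnit.unit_spec hu] at h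
  exact (irreducible_units_mul hu.unit (y := P₄)).mp h

lemma P4_monic : P₄.Monic := by
  have h := congrArg (fun p => Polynomial.coeff p 20) Qz_map_rat
  simp only [coeff_map, Qz_coeff_20, coeff_C_mul] at h
  have hdeg : P₄.natDegree = 20 := by
    have hd := congrArg natDegree Qz_map_rat
    rw [Polynomial.natDegree_map_of_leadingCoeff_ne_zero _ (by
      rw [Qz_leadingCoeff]; norm_num), Qz_natDegree,
      natDegree_C_mul (by norm_num : (11:ℚ) ≠ 0)] at hd
    omega
  rw [Polynomial.Monic, Polynomial.leadingCoeff, hdeg]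
  have : ((11:ℤ):ℚ) = 11 * P₄.coeff 20 := h
  push_cast at this
  linarith

lemma P4_coeff_10 : P₄.coeff 10 = -219/11 := by
  have h := congrArg (fun p => Polynomial.coeff p 10) Qz_map_rat
  simp only [coeff_map, Qz_coeff_10, coeff_C_mul] at h
  have : ((-219:ℤ):ℚ) = 11 * P₄.coeff 10 := h
  push_cast at this
  linarith

/-- `P₄` is irreducible over `ℚ`, and no complex root of unity is a root of `P₄`. -/
theorem stmt17 :
    Irreducible P₄ ∧ ∀ z : ℂ, (∃ n : ℕ, 1 ≤ n ∧ z ^ n = 1) → aeval z P₄ ≠ 0 := by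
  refine ⟨P4_irreducible, ?_⟩
  rintro z ⟨n, hn1, hzn⟩ hroot
  have hzint : IsIntegral ℤ z := by
    refine ⟨X ^ n - C 1, monic_X_pow_sub_C 1 (by omega), ?_⟩
    simp [hzn]
  have hP4min : P₄ = minpoly ℚ z :=
    minpoly.eq_of_irreducible_of_monic P4_irreducible hroot P4_monic
  have heq : minpoly ℚ z = (minpoly ℤ z).map (algebraMap ℤ ℚ) :=
    minpoly.isIntegrallyClosed_eq_field_fractions ℚ ℂ hzint
  have h10 : P₄.coeff 10 = (((minpoly ℤ z).coeff 10 : ℤ) : ℚ) := by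
    rw [hP4min, heq, coeff_map]
    rfl
  rw [P4_coeff_10] at h10
  set m := (minpoly ℤ z).coeff 10 with hm
  have h11 : (-219 : ℚ) = 11 * (m:ℚ) := by
    field_simp at h10
    linarith
  have h11' : (-219 : ℤ) = 11 * m := by exact_mod_cast h11
  omega
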